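/- Let β, c, d1, d2, ℓ > 0 and define T1(λ) = -c + λ(1-βλ)/(1+λ) - (d1+d2)/ℓ². If c < p2(λ2) := max_{λ∈[0,1/β]} λ(1-βλ)/(1+λ) and ℓ > ℓ1 := √((d1+d2)/(p2(λ2)-c)), then T1 has exactly two zeros λ_-, λ_+ in (0, 1/β) with λ_- < λ2 < λ_+, T1 > 0 on (λ_-, λ_+), and T1 < 0 on (0, λ_-) ∪ (λ_+, 1/β). -/

import Mathlib

set_option maxHeartbeats 1000000


theorem stmt6 (β c d1 d2 ℓ : ℝ) (hβ : 0 < β) (hc : 0 < c) (hd1 : 0 < d1)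
    (hd2 : 0 < d2) (hℓ : 0 < ℓ) :
    let p2 : ℝ → ℝ := fun lam => lam*(1-β*lam)/(1+lam)
    let lam2 : ℝ := Real.sqrt ((β+1)/β) - 1
    let T1 : ℝ → ℝ := fun lam => -c + lam*(1-β*lam)/(1+lam) - (d1+d2)/ℓ^2
    c < p2 lam2 → ℓ > Real.sqrt ((d1+d2)/(p2 lam2 - c)) →
    ∃ lamm lamp : ℝ,
      0 < lamm ∧ lamm < lam2 ∧ lam2 < lamp ∧ lamp < 1/β ∧
      T1 lamm = 0 ∧ T1 lamp = 0 ∧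
      (∀ lam ∈ Set.Ioo lamm lamp, 0 < T1 lam) ∧
      (∀ lam ∈ Set.Ioo 0 lamm ∪ Set.Ioo lamp (1/β), T1 lam < 0) ∧
      (∀ lam ∈ Set.Ioo 0 (1/β), T1 lam = 0 → lam = lamm ∨ lam = lamp) := by
  intro p2 lam2 T1 hcP hl
  have hT1def : ∀ x, T1 x = -c + x*(1-β*x)/(1+x) - (d1+d2)/ℓ^2 := fun _ => rfl
  have hlam2def : lam2 = Real.sqrt ((β+1)/β) - 1 := rfl
  -- lam2 > 0
  have hlam2 : 0 < lam2 := by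
    have h1 : (1:ℝ) < (β+1)/β := by
      rw [lt_div_iff₀ hβ]; linarith
    have h2 : (1:ℝ) < Real.sqrt ((β+1)/β) := by
      have := Real.sqrt_lt_sqrt (by norm_num) h1
      simpa using this
    rw [hlam2def]; linarith
  have h1l2 : (0:ℝ) < 1 + lam2 := by linarith
  set P : ℝ := lam2*(1-β*lam2)/(1+lam2) with hPdef
  have hcP' : c < P := hcP
  have hPc : 0 < P - c := by linarith
  set K : ℝ := c + (d1+d2)/ℓ^2 with hKdef
  have hℓ2 : (0:ℝ) < ℓ^2 := by positivity
  have hK0 : 0 < K := by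
    have : 0 < (d1+d2)/ℓ^2 := by positivity
    rw [hKdef]; linarith
  -- K < P
  have hKP : K < P := by
    have h1 : (d1+d2)/(P-c) < ℓ^2 := (Real.sqrt_lt' hℓ).mp hl
    have h2 : d1+d2 < ℓ^2*(P-c) := (div_lt_iff₀ hPc).mp h1
    have h3 : (d1+d2)/ℓ^2 < P - c := (div_lt_iff₀ hℓ2).mpr (by nlinarith)
    rw [hKdef]; linarith
  clear_value p2 T1 lam2 P
  -- P < 1
  have hP1 : P < 1 := by
    rw [hPdef, div_lt_one h1l2]
    nlinarith [sq_nonneg lam2]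
  have hK1 : K < 1 := lt_trans hKP hP1
  -- q(lam2) < 0
  have hq2 : β*lam2^2 + (K-1)*lam2 + K < 0 := by
    have h1 : K*(1+lam2) < lam2*(1-β*lam2) := by
      have hKP2 := hKP
      rw [hPdef] at hKP2
      have := (lt_div_iff₀ h1l2).mp hKP2
      linarith
    nlinarith
  -- discriminant positive
  have hΔ : 0 < (K-1)^2 - 4*β*K := by
    nlinarith [sq_nonneg (2*β*lam2 + (K-1)), mul_pos hβ (neg_pos.mpr hq2)]
  set s : ℝ := Real.sqrt ((K-1)^2 - 4*β*K) with hsdef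
  have hs2 : s^2 = (K-1)^2 - 4*β*K := Real.sq_sqrt hΔ.le
  have hs0 : 0 < s := Real.sqrt_pos.mpr hΔ
  set lamm : ℝ := (1-K-s)/(2*β) with hmdef
  set lamp : ℝ := (1-K+s)/(2*β) with hpdef
  clear_value K s lamm lamp
  have hβ' : (2*β) ≠ 0 := by positivity
  -- factorization of the quadratic
  have hfact : ∀ lam : ℝ, β*(lam-lamm)*(lam-lamp) = β*lam^2 + (K-1)*lam + K := by
    intro lam
    rw [hmdef, hpdef]
    field_simp
    linear_combination (-1)*hs2
  -- key formula for T1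
  have key : ∀ lam : ℝ, -1 < lam →
      T1 lam = -(β*(lam-lamm)*(lam-lamp))/(1+lam) := by
    intro lam h
    have h1 : (1:ℝ) + lam ≠ 0 := by linarith
    rw [hT1def, hfact lam]
    have hKc : (d1+d2)/ℓ^2 = K - c := by rw [hKdef]; ring
    rw [hKc]
    field_simp
    ring
  -- s < 1 - K
  have hs1 : s < 1 - K := by
    nlinarith [hs2, hs0]
  have hmpos : 0 < lamm := by
    rw [hmdef]
    apply div_pos (by linarith) (by linarith)
  have hmp : lamm < lamp := by
    rw [hmdef, hpdef, div_lt_div_iff₀ (by positivity) (by positivity)]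
    nlinarith
  -- lamm < lam2 < lamp
  have hq2' : β*(lam2-lamm)*(lam2-lamp) < 0 := by rw [hfact lam2]; exact hq2
  have hmlam2 : lamm < lam2 := by
    by_contra h
    push_neg at h
    have h1 : lam2 - lamp < 0 := by linarith
    have h2 : lam2 - lamm ≤ 0 := by linarith
    have h3 : 0 ≤ (lam2-lamm)*(lam2-lamp) := by nlinarith [mul_nonneg (neg_nonneg.mpr h2) (neg_nonneg.mpr h1.le)]
    have h4 := mul_nonneg hβ.le h3
    nlinarith [h4]
  have hlam2p : lam2 < lamp := by
    by_contra h
    push_neg at h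
    have h1 : 0 ≤ lam2 - lamp := by linarith
    have h2 : 0 < lam2 - lamm := by linarith
    have h3 : 0 ≤ (lam2-lamm)*(lam2-lamp) := mul_nonneg h2.le h1
    have h4 := mul_nonneg hβ.le h3
    nlinarith [h4]
  -- lamp < 1/β
  have hsK : s < 1 + K := by nlinarith [hs2, hs0]
  have hp1β : lamp < 1/β := by
    rw [hpdef, div_lt_div_iff₀ (by linarith) hβ]
    nlinarith
  have hppos : 0 < lamp := lt_trans hlam2 hlam2p
  refine ⟨lamm, lamp, hmpos, hmlam2, hlam2p, hp1β, ?_, ?_, ?_, ?_, ?_⟩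
  · rw [key lamm (by linarith)]; simp
  · rw [key lamp (by linarith)]; simp
  · rintro lam ⟨h1, h2⟩
    rw [key lam (by linarith)]
    apply div_pos ?_ (by linarith)
    nlinarith [mul_pos hβ (mul_pos (sub_pos.mpr h1) (sub_pos.mpr h2))]
  · rintro lam (⟨h1, h2⟩ | ⟨h1, h2⟩)
    · rw [key lam (by linarith)]
      apply div_neg_of_neg_of_pos ?_ (by linarith)
      have h3 : lam < lamp := lt_trans h2 (lt_trans hmlam2 hlam2p)
      nlinarith [mul_pos hβ (mul_pos (sub_pos.mpr h2) (sub_pos.mpr h3))]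
    · rw [key lam (by linarith [hmpos, hmp] : (-1:ℝ) < lam)]
      apply div_neg_of_neg_of_pos ?_ ?_
      · have h3 : lamm < lam := lt_trans hmp h1
        nlinarith [mul_pos hβ (mul_pos (sub_pos.mpr h3) (sub_pos.mpr h1))]
      · have : 0 < lam := lt_trans hppos h1
        linarith
  · rintro lam ⟨h1, h2⟩ hz
    rw [key lam (by linarith)] at hz
    have h1l : (1:ℝ) + lam ≠ 0 := by linarith
    have hnum : β*(lam-lamm)*(lam-lamp) = 0 := by
      have := (div_eq_zero_iff.mp hz).resolve_right h1l
      linarith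
    rcases mul_eq_zero.mp hnum with h | h
    · rcases mul_eq_zero.mp h with h' | h'
      · exact absurd h' hβ.ne'
      · left; linarith [sub_eq_zero.mp h']
    · right; linarith [sub_eq_zero.mp h]
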